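/- For all scalars x, y over a field of characteristic zero with y ≠ 9/5, y ≠ −7/5, and 2x − y + 1 ≠ 0, the 6-tuple b_1 = (5xy−17x+10y+2)/(5y−9), b_2 = x, b_3 = y, b_4 = y − 2/5, b_5 = (1/5)(5xy+3x−6)/(2x−y+1), b_6 = (5xy²−2xy−22y+10y²+21x−12)/((2x−y+1)(5y+7)) satisfies the four defining equations R^5_1, R^5_2, R^5_3, R^7_1 of 8-dimensional graded thread W+-modules of type (1,1,…,1). -/

import Mathlib

set_option maxHeartbeats 1000000


/-- The defining equations `R⁵₁, R⁵₂, R⁵₃, R⁷₁` of 8-dimensional graded thread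
`W⁺`-modules of type `(1,1,…,1)`. -/
def Rsys {K : Type*} [Field K] (b1 b2 b3 b4 b5 b6 : K) : Prop :=
  (b4 * (b1 - b2) - b1 * (b3 - b4) = b1 - 3 * b2 + 3 * b3 - b4) ∧
  (b5 * (b2 - b3) - b2 * (b4 - b5) = b2 - 3 * b3 + 3 * b4 - b5) ∧
  (b6 * (b3 - b4) - b3 * (b5 - b6) = b3 - 3 * b4 + 3 * b5 - b6) ∧
  (b6 * (b1 - 3 * b2 + 3 * b3 - b4) - b1 * (b3 - 3 * b4 + 3 * b5 - b6) =
    (9 / 10) * (b1 - 5 * b2 + 10 * b3 - 10 * b4 + 5 * b5 - b6))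

/-- the two-parameter family `M₂` satisfies the system. -/
theorem stmt_13 {K : Type*} [Field K] [CharZero K] (x y : K)
    (hy1 : y ≠ 9 / 5) (hy2 : y ≠ -(7 / 5)) (hxy : 2 * x - y + 1 ≠ 0) :
    Rsys ((5 * x * y - 17 * x + 10 * y + 2) / (5 * y - 9)) x y (y - 2 / 5)
      ((1 / 5) * (5 * x * y + 3 * x - 6) / (2 * x - y + 1))
      ((5 * x * y ^ 2 - 2 * x * y - 22 * y + 10 * y ^ 2 + 21 * x - 12) /
        ((2 * x - y + 1) * (5 * y + 7))) := by
  have h1 : (5 : K) * y - 9 ≠ 0 := by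
    intro h; apply hy1; linear_combination h/5
  have h2 : (5 : K) * y + 7 ≠ 0 := by
    intro h; apply hy2; linear_combination h/5
  have h1' : y * 5 - 9 ≠ 0 := by rwa [mul_comm]
  have h2' : y * 5 + 7 ≠ 0 := by rwa [mul_comm]
  have hxy' : x * 2 - y + 1 ≠ 0 := by rwa [mul_comm]
  refine ⟨by field_simp; ring, by field_simp; ring, by field_simp; ring, ?_⟩
  have h5 : (5:K) ≠ 0 := by norm_num
  have h10 : (10:K) ≠ 0 := by norm_num
  field_simp
  ring
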